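/- Let f : ℂ^n → ℂ^n be a polynomial map such that Pre(f) is Zariski dense and Pre_{m,l}(f) is a finite set for all integers m > l ≥ 0 (the paper's hypothesis that Pre(f) is of bounded height yields this finiteness via Northcott's theorem). Then for every positive integer d, the set Com(f, d) = {g : ℂ^n → ℂ^n a polynomial map : f ∘ g = g ∘ f and deg g = d} is finite. -/

import Mathlib

/-- Eventual periodicity of iterates. -/
lemma per_aux {α : Type*} (f : α → α) (P : α) {m l : ℕ} (hlm : l < m)
    (h : f^[m] P = f^[l] P) {a c : ℕ} (ha : l ≤ a) (hc : (m - l) ∣ c) :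
    f^[a + c] P = f^[a] P := by
  obtain ⟨j, rfl⟩ := hc
  have key : ∀ j : ℕ, f^[l + (m - l) * j] P = f^[l] P := by
    intro j
    induction j with
    | zero => simp
    | succ j ih =>
      have e1 : l + (m - l) * (j + 1) = (m - l) + (l + (m - l) * j) := by ring
      rw [e1, Function.iterate_add_apply, ih, ← Function.iterate_add_apply]
      have e2 : m - l + l = m := Nat.sub_add_cancel hlm.le
      rw [e2, h]
  have e3 : a + (m - l) * j = (a - l) + (l + (m - l) * j) := by omega
  rw [e3, Function.iterate_add_apply, key, ← Function.iterate_add_apply]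
  congr 1
  omega

/-- A finite interpolation subset of a Zariski-dense set, for degree at most `d`. -/
lemma exists_interp {n : ℕ} (d : ℕ) (A : Set (Fin n → ℂ))
    (hdense : ∀ q : MvPolynomial (Fin n) ℂ, (∀ P ∈ A, MvPolynomial.eval P q = 0) → q = 0) :
    ∃ T : Finset (Fin n → ℂ), ↑T ⊆ A ∧
      ∀ q : MvPolynomial (Fin n) ℂ, q.totalDegree ≤ d →
        (∀ P ∈ T, MvPolynomial.eval P q = 0) → q = 0 := by
  let V := MvPolynomial.restrictTotalDegree (Fin n) ℂ d
  let ε : (Fin n → ℂ) → (V →ₗ[ℂ] ℂ) := fun P =>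
    (MvPolynomial.aeval P).toLinearMap ∘ₗ V.subtype
  have hεeval : ∀ (P : Fin n → ℂ) (q : V),
      ε P q = MvPolynomial.eval P (q : MvPolynomial (Fin n) ℂ) := by
    intro P q
    show (MvPolynomial.aeval P) (q : MvPolynomial (Fin n) ℂ) = _
    rw [← MvPolynomial.coe_aeval_eq_eval]
    rfl
  let K : Finset (Fin n → ℂ) → Submodule ℂ V := fun T => T.inf fun P => LinearMap.ker (ε P)
  have hKmem : ∀ (T : Finset (Fin n → ℂ)) (q : V), q ∈ K T ↔ ∀ P ∈ T, ε P q = 0 := by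
    intro T q
    simp [K, Finset.inf_eq_iInf, Submodule.mem_iInf, LinearMap.mem_ker]
  have hKins : ∀ (P : Fin n → ℂ) (T : Finset (Fin n → ℂ)),
      K (insert P T) = LinearMap.ker (ε P) ⊓ K T := fun P T => Finset.inf_insert ..
  let s : Set ℕ := {k | ∃ T : Finset (Fin n → ℂ), ↑T ⊆ A ∧ Module.finrank ℂ (K T) = k}
  have hs : s.Nonempty := ⟨_, ∅, by simp, rfl⟩
  obtain ⟨T₀, hT₀A, hT₀rk⟩ := Nat.sInf_mem hs
  have hmin : ∀ P ∈ A, K T₀ ≤ LinearMap.ker (ε P) := by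
    intro P hP
    by_contra hcon
    have hlt : K (insert P T₀) < K T₀ := by
      rw [hKins]
      refine lt_of_le_of_ne inf_le_right fun he => hcon ?_
      exact le_of_eq he.symm |>.trans inf_le_left
    have hrk : Module.finrank ℂ (K (insert P T₀)) < Module.finrank ℂ (K T₀) :=
      Submodule.finrank_lt_finrank_of_lt hlt
    have hmem : Module.finrank ℂ (K (insert P T₀)) ∈ s := by
      refine ⟨insert P T₀, ?_, rfl⟩
      intro x hx
      rcases Finset.mem_insert.mp hx with rfl | hx
      · exact hP
      · exact hT₀A hx
    have := Nat.sInf_le hmem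
    omega
  refine ⟨T₀, hT₀A, ?_⟩
  intro q hqd hqT
  have hqV : q ∈ V := (MvPolynomial.mem_restrictTotalDegree _ _ _).mpr hqd
  have hq0 : (⟨q, hqV⟩ : V) ∈ K T₀ := by
    rw [hKmem]
    intro P hP
    rw [hεeval]
    exact hqT P hP
  refine hdense q fun P hP => ?_
  have := hmin P hP hq0
  rw [LinearMap.mem_ker, hεeval] at this
  exact this

/-- Let `f : ℂ^n → ℂ^n` be a polynomial map such that `Pre f` is Zariski dense and each
`Pre_{m,l}(f)` is finite.  Then for every `d ≥ 1`, the set of polynomial maps of degree `d`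
commuting with `f` is finite. -/
theorem com_finite {n : ℕ} (f : (Fin n → ℂ) → (Fin n → ℂ))
    (hfpoly : ∃ p : Fin n → MvPolynomial (Fin n) ℂ,
      ∀ (x : Fin n → ℂ) (i : Fin n), f x i = MvPolynomial.eval x (p i))
    (hdense : ∀ q : MvPolynomial (Fin n) ℂ,
      (∀ P ∈ {P : Fin n → ℂ | ∃ m l : ℕ, l < m ∧ f^[m] P = f^[l] P},
        MvPolynomial.eval P q = 0) → q = 0)
    (hfin : ∀ m l : ℕ, l < m → {P : Fin n → ℂ | f^[m] P = f^[l] P}.Finite)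
    (d : ℕ) (hd : 1 ≤ d) :
    {g : (Fin n → ℂ) → (Fin n → ℂ) |
        (∃ p : Fin n → MvPolynomial (Fin n) ℂ,
            (∀ (x : Fin n → ℂ) (i : Fin n), g x i = MvPolynomial.eval x (p i)) ∧
              Finset.univ.sup (fun i => (p i).totalDegree) = d) ∧
          f ∘ g = g ∘ f}.Finite := by
  classical
  -- interpolation set inside Pre(f)
  obtain ⟨T, hTA, hinterp⟩ := exists_interp d _ hdense
  -- common eventual period for points of T
  have h1 : ∀ P ∈ T, ∃ N : ℕ, 0 < N ∧ ∀ N', N ∣ N' → 0 < N' → f^[N' + N'] P = f^[N'] P := by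
    intro P hP
    obtain ⟨m, l, hlm, heq⟩ := hTA hP
    refine ⟨m * (m - l), Nat.mul_pos (by omega) (by omega), ?_⟩
    intro N' hdvd hN'
    have hNle : m * (m - l) ≤ N' := Nat.le_of_dvd hN' hdvd
    have hl : l ≤ N' := by nlinarith [Nat.sub_pos_of_lt hlm]
    have hml : (m - l) ∣ N' := dvd_trans (Dvd.intro_left m rfl) hdvd
    exact per_aux f P hlm heq hl hml
  choose Nf hNf0 hNf using h1
  set N : ℕ := ∏ p ∈ T.attach, Nf p.1 p.2 with hN
  have hN0 : 0 < N := Finset.prod_pos fun p _ => hNf0 p.1 p.2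
  have hTS : ∀ P ∈ T, f^[N + N] P = f^[N] P := by
    intro P hP
    exact hNf P hP _ (Finset.dvd_prod_of_mem _ (Finset.mem_attach T ⟨P, hP⟩)) hN0
  set S : Set (Fin n → ℂ) := {P : Fin n → ℂ | f^[N + N] P = f^[N] P} with hSdef
  have hS : S.Finite := hfin (N + N) N (by omega)
  -- the restriction map to T is injective on Com(f,d) with values in maps T → S
  set C : Set ((Fin n → ℂ) → (Fin n → ℂ)) :=
    {g | (∃ p : Fin n → MvPolynomial (Fin n) ℂ,
            (∀ (x : Fin n → ℂ) (i : Fin n), g x i = MvPolynomial.eval x (p i)) ∧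
              Finset.univ.sup (fun i => (p i).totalDegree) = d) ∧
          f ∘ g = g ∘ f} with hC
  let Φ : ((Fin n → ℂ) → (Fin n → ℂ)) → ({x // x ∈ T} → (Fin n → ℂ)) :=
    fun g p => g p.1
  have hmapsS : ∀ g ∈ C, ∀ P ∈ S, g P ∈ S := by
    intro g hg P hP
    have hcomm : Function.Commute f g := fun x => congrFun hg.2 x
    have := (hcomm.iterate_left (N + N)) P
    have h2 := (hcomm.iterate_left N) P
    show f^[N + N] (g P) = f^[N] (g P)
    rw [this, h2, hP]
  have himg : Φ '' C ⊆ Set.pi Set.univ (fun _ : {x // x ∈ T} => S) := by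
    rintro _ ⟨g, hg, rfl⟩ p _
    exact hmapsS g hg p.1 (hTS p.1 p.2)
  have hinj : Set.InjOn Φ C := by
    rintro g₁ hg₁ g₂ hg₂ he
    obtain ⟨⟨p₁, hp₁, hd₁⟩, -⟩ := hg₁
    obtain ⟨⟨p₂, hp₂, hd₂⟩, -⟩ := hg₂
    have hpe : ∀ i, p₁ i = p₂ i := by
      intro i
      have hdeg : (p₁ i - p₂ i).totalDegree ≤ d := by
        refine (MvPolynomial.totalDegree_sub _ _).trans ?_
        have h₁ : (p₁ i).totalDegree ≤ d :=
          hd₁ ▸ Finset.le_sup (f := fun j => (p₁ j).totalDegree) (Finset.mem_univ i)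
        have h₂ : (p₂ i).totalDegree ≤ d :=
          hd₂ ▸ Finset.le_sup (f := fun j => (p₂ j).totalDegree) (Finset.mem_univ i)
        exact max_le h₁ h₂
      have hvan : ∀ P ∈ T, MvPolynomial.eval P (p₁ i - p₂ i) = 0 := by
        intro P hP
        have : g₁ P = g₂ P := congrFun he ⟨P, hP⟩
        rw [map_sub, ← hp₁, ← hp₂, congrFun this i, sub_self]
      have := hinterp _ hdeg hvan
      exact sub_eq_zero.mp this
    funext x
    funext i
    rw [hp₁, hp₂, hpe i]
  have hfinimg : (Φ '' C).Finite :=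
    Set.Finite.subset (Set.Finite.pi fun _ => hS) himg
  exact Set.Finite.of_finite_image hfinimg hinj
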